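/- Let V ⊆ ℝ² be a Euclidean TSP instance and let a, b ∈ V be such that V ⊆ segment ℝ a b. Then every tour σ of V satisfies c(σ) ≥ 2 · dist(a, b). -/

import Mathlib

/-- Points in the Euclidean plane. -/
abbrev Pt : Type := EuclideanSpace ℝ (Fin 2)

/-- A tour of a finite point set `V`: a map sending `V` into `V` that acts as a
single cycle on all of `V`. -/
def IsTour (V : Finset Pt) (σ : Pt → Pt) : Prop :=
  (∀ x ∈ V, σ x ∈ V) ∧ ∀ x ∈ V, ∀ y ∈ V, ∃ m : ℕ, σ^[m] x = y

/-- The length of a tour. -/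
noncomputable def tourLength (V : Finset Pt) (σ : Pt → Pt) : ℝ :=
  ∑ x ∈ V, dist x (σ x)

/-- An optimal tour. -/
def IsOptimalTour (V : Finset Pt) (σ : Pt → Pt) : Prop :=
  IsTour V σ ∧ ∀ τ : Pt → Pt, IsTour V τ → tourLength V σ ≤ tourLength V τ

/-- A 2-optimal tour. -/
def IsTwoOptimalTour (V : Finset Pt) (σ : Pt → Pt) : Prop :=
  IsTour V σ ∧ ∀ a ∈ V, ∀ x ∈ V,
    dist a (σ a) + dist x (σ x) ≤ dist a x + dist (σ a) (σ x)

theorem tour_length_ge_of_subset_segment (V : Finset Pt) (hV : 3 ≤ V.card)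
    (a b : Pt) (ha : a ∈ V) (hb : b ∈ V) (hseg : (V : Set Pt) ⊆ segment ℝ a b)
    (σ : Pt → Pt) (hσ : IsTour V σ) :
    2 * dist a b ≤ tourLength V σ := by
  classical
  obtain ⟨hmaps, hcyc⟩ := hσ
  have hf : ∀ i : ℕ, σ^[i] a ∈ V := by
    intro i
    induction i with
    | zero => simpa
    | succ n ih => rw [Function.iterate_succ_apply']; exact hmaps _ ih
  by_cases hab : a = b
  · have h0 : 0 ≤ tourLength V σ := Finset.sum_nonneg fun x _ => dist_nonneg
    subst hab
    simpa using h0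
  obtain ⟨m, hm⟩ := hcyc a ha b hb
  obtain ⟨p, hp⟩ := hcyc b hb a ha
  have hk : σ^[p + m] a = a := by
    rw [Function.iterate_add_apply, hm, hp]
  have hm0 : 0 < m := by
    rcases Nat.eq_zero_or_pos m with h | h
    · subst h; simp at hm; exact absurd hm hab
    · exact h
  have hex : ∃ k, 0 < k ∧ σ^[k] a = a := ⟨p + m, by omega, hk⟩
  set N := Nat.find hex with hNdef
  obtain ⟨hN0, hNa⟩ := Nat.find_spec hex
  have hmul : ∀ q : ℕ, σ^[q * N] a = a := by
    intro q
    induction q with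
    | zero => simp
    | succ q ih => rw [Nat.succ_mul, Function.iterate_add_apply, hNa, ih]
  set r := m % N with hrdef
  have hrb : σ^[r] a = b := by
    have hq : m = r + N * (m / N) := (Nat.mod_add_div m N).symm
    have hmul' : σ^[N * (m / N)] a = a := by rw [Nat.mul_comm]; exact hmul _
    rw [← hm, hq, Function.iterate_add_apply, hmul']
  have hrN : r < N := Nat.mod_lt _ hN0
  have hr0 : 0 < r := by
    rcases Nat.eq_zero_or_pos r with h | h
    · rw [h] at hrb; simp at hrb; exact absurd hrb hab
    · exact h
  -- injectivity of the orbit on range N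
  have hinj : ∀ i ∈ Finset.range N, ∀ j ∈ Finset.range N,
      σ^[i] a = σ^[j] a → i = j := by
    have key : ∀ i j : ℕ, i < j → j < N → σ^[i] a = σ^[j] a → False := by
      intro i j hij hjN heq
      have h1 : σ^[(N - j) + i] a = a := by
        rw [Function.iterate_add_apply, heq, ← Function.iterate_add_apply]
        have : N - j + j = N := by omega
        rw [this, hNa]
      have h2 : N - j + i < N := by omega
      exact Nat.find_min hex h2 ⟨by omega, h1⟩
    intro i hi j hj heq
    simp only [Finset.mem_range] at hi hj
    rcases lt_trichotomy i j with h | h | h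
    · exact absurd heq (fun e => key i j h hj e)
    · exact h
    · exact absurd heq.symm (fun e => key j i h hi e)
  have key : ∑ i ∈ Finset.range N, dist (σ^[i] a) (σ^[i + 1] a) ≤ tourLength V σ := by
    have himg : ∑ x ∈ (Finset.range N).image (fun i => σ^[i] a), dist x (σ x)
        = ∑ i ∈ Finset.range N, dist (σ^[i] a) (σ (σ^[i] a)) :=
      Finset.sum_image hinj
    have hsub : (Finset.range N).image (fun i => σ^[i] a) ⊆ V := by
      intro x hx
      simp only [Finset.mem_image] at hx
      obtain ⟨i, _, rfl⟩ := hx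
      exact hf i
    calc ∑ i ∈ Finset.range N, dist (σ^[i] a) (σ^[i + 1] a)
        = ∑ i ∈ Finset.range N, dist (σ^[i] a) (σ (σ^[i] a)) := by
          refine Finset.sum_congr rfl fun i _ => ?_
          rw [Function.iterate_succ_apply']
      _ = ∑ x ∈ (Finset.range N).image (fun i => σ^[i] a), dist x (σ x) := himg.symm
      _ ≤ tourLength V σ :=
          Finset.sum_le_sum_of_subset_of_nonneg hsub fun _ _ _ => dist_nonneg
  have hsplit : ∑ i ∈ Finset.range N, dist (σ^[i] a) (σ^[i + 1] a)
      = (∑ i ∈ Finset.range r, dist (σ^[i] a) (σ^[i + 1] a))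
      + ∑ i ∈ Finset.range (N - r), dist (σ^[r + i] a) (σ^[r + i + 1] a) := by
    have hN' : N = r + (N - r) := by omega
    rw [hN', Finset.sum_range_add]
    simp
  have h1 : dist a b ≤ ∑ i ∈ Finset.range r, dist (σ^[i] a) (σ^[i + 1] a) := by
    have := dist_le_range_sum_dist (fun i => σ^[i] a) r
    simpa [hrb] using this
  have h2 : dist b a ≤ ∑ i ∈ Finset.range (N - r), dist (σ^[r + i] a) (σ^[r + i + 1] a) := by
    have := dist_le_range_sum_dist (fun i => σ^[r + i] a) (N - r)
    have hrN' : r + (N - r) = N := by omega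
    simp only [Nat.add_zero, hrN', hNa, hrb] at this
    rw [hNdef, hNa] at this
    simpa only [Nat.add_assoc] using this
  have hcomm : dist b a = dist a b := dist_comm b a
  linarith [key, hsplit, h1, h2]
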